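/- Let P(ξ) = Iξ^L + P_{L-1}ξ^{L-1} + ... + P_0 with P_i ∈ ℝ^{p×p}, and let P denote the coefficient matrix [P_0 P_1 ... P_{L-1}] ∈ ℝ^{p×pL}. If there exists Ψ ∈ S^{pL} with Ψ ≥ 0 such that [I; -P]ᵀ ( diag(0_p, Ψ) - diag(Ψ, 0_p) ) [I; -P] < 0, then the companion matrix of P(ξ) is Schur stable (all roots λ of det P(λ) = 0 satisfy |λ| < 1). -/

import Mathlib

open scoped Matrix

/-- The block companion matrix of the monic matrix polynomial
P(ξ) = Iξ^L + P_{L-1}ξ^{L-1} + ⋯ + P₀: identity blocks on the superdiagonal and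
last block row [-P₀, …, -P_{L-1}]. -/
def blockCompanion (p L : ℕ) (P : Fin L → Matrix (Fin p) (Fin p) ℝ) :
    Matrix (Fin L × Fin p) (Fin L × Fin p) ℝ :=
  Matrix.of fun i j =>
    if (i.1 : ℕ) + 1 = L then -(P j.1 i.2 j.2)
    else if (j.1 : ℕ) = (i.1 : ℕ) + 1 ∧ i.2 = j.2 then 1 else 0

/-- The coefficient matrix P = [P₀ P₁ ⋯ P_{L-1}] ∈ ℝ^{p×pL}. -/
def coeffMatrix (p L : ℕ) (P : Fin L → Matrix (Fin p) (Fin p) ℝ) :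
    Matrix (Fin p) (Fin L × Fin p) ℝ :=
  Matrix.of fun a j => P j.1 a j.2

/-- The stacked matrix [I_{pL}; -P] ∈ ℝ^{(pL+p)×pL}, with the p(L+1) rows indexed
lexicographically by Fin (L+1) × Fin p (rows with block index < L carry I_{pL}). -/
def stackedIP (p L : ℕ) (P : Fin L → Matrix (Fin p) (Fin p) ℝ) :
    Matrix (Fin (L + 1) × Fin p) (Fin L × Fin p) ℝ :=
  Matrix.of fun i j =>
    if (i.1 : ℕ) < L then (if (i.1 : ℕ) = (j.1 : ℕ) ∧ i.2 = j.2 then 1 else 0)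
    else -(P j.1 i.2 j.2)

/-- Embedding placing a pL×pL matrix Ψ as the upper-left block of a
p(L+1)×p(L+1) matrix: diag(Ψ, 0_p) = E₁ Ψ E₁ᵀ. -/
def embedUpper (p L : ℕ) : Matrix (Fin (L + 1) × Fin p) (Fin L × Fin p) ℝ :=
  Matrix.of fun i j => if (i.1 : ℕ) = (j.1 : ℕ) ∧ i.2 = j.2 then 1 else 0

/-- Embedding placing a pL×pL matrix Ψ as the lower-right block of a
p(L+1)×p(L+1) matrix: diag(0_p, Ψ) = E₂ Ψ E₂ᵀ. -/
def embedLower (p L : ℕ) : Matrix (Fin (L + 1) × Fin p) (Fin L × Fin p) ℝ :=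
  Matrix.of fun i j => if (i.1 : ℕ) = (j.1 : ℕ) + 1 ∧ i.2 = j.2 then 1 else 0


section Aux

open Matrix

private lemma aux_upper_mul (p L : ℕ) (P : Fin L → Matrix (Fin p) (Fin p) ℝ) :
    (embedUpper p L)ᵀ * stackedIP p L P = 1 := by
  ext i j
  rw [Matrix.mul_apply]
  rw [Finset.sum_eq_single ((i.1.castSucc : Fin (L+1)), i.2)]
  · simp [embedUpper, stackedIP, Matrix.one_apply, i.1.isLt, Prod.ext_iff, Fin.ext_iff]
  · rintro ⟨k1, k2⟩ - hk
    simp only [embedUpper, stackedIP, transpose_apply, of_apply]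
    rw [if_neg]
    · simp
    · rintro ⟨h1, h2⟩
      exact hk (by simp [Prod.ext_iff, Fin.ext_iff, h1, h2])
  · simp

private lemma aux_lower_mul (p L : ℕ) (P : Fin L → Matrix (Fin p) (Fin p) ℝ) :
    (embedLower p L)ᵀ * stackedIP p L P = blockCompanion p L P := by
  ext i j
  rw [Matrix.mul_apply]
  rw [Finset.sum_eq_single ((i.1.succ : Fin (L+1)), i.2)]
  · simp only [embedLower, stackedIP, blockCompanion, transpose_apply, of_apply,
      Fin.val_succ, and_self, if_true, one_mul]
    by_cases h : (i.1 : ℕ) + 1 = L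
    · simp [h]
    · have hlt : (i.1 : ℕ) + 1 < L := lt_of_le_of_ne i.1.isLt h
      simp [h, hlt, eq_comm]
  · rintro ⟨k1, k2⟩ - hk
    simp only [embedLower, transpose_apply, of_apply]
    rw [if_neg]
    · simp
    · rintro ⟨h1, h2⟩
      exact hk (by simp [Prod.ext_iff, Fin.ext_iff, h1, h2, Fin.val_succ])
  · simp

private lemma aux_re_quad {n : Type*} [Fintype n] (Q : Matrix n n ℝ) (v : n → ℂ) :
    (star v ⬝ᵥ (Q.map (Complex.ofReal)) *ᵥ v).re
      = (fun i => (v i).re) ⬝ᵥ Q *ᵥ (fun i => (v i).re)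
        + (fun i => (v i).im) ⬝ᵥ Q *ᵥ (fun i => (v i).im) := by
  simp only [dotProduct, mulVec, Matrix.map_apply, Pi.star_apply, Finset.mul_sum,
    Complex.re_sum, ← Finset.sum_add_distrib]
  refine Finset.sum_congr rfl fun i _ => Finset.sum_congr rfl fun j _ => ?_
  simp [Complex.mul_re, Complex.mul_im]

private lemma aux_re_quad_nonneg {n : Type*} [Fintype n] {Q : Matrix n n ℝ}
    (hQ : Q.PosSemidef) (v : n → ℂ) :
    0 ≤ (star v ⬝ᵥ (Q.map (Complex.ofReal)) *ᵥ v).re := by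
  rw [aux_re_quad]
  have h1 := hQ.dotProduct_mulVec_nonneg (fun i => (v i).re)
  have h2 := hQ.dotProduct_mulVec_nonneg (fun i => (v i).im)
  simp only [star_trivial, RCLike.re_to_real] at h1 h2
  linarith

private lemma aux_re_quad_pos {n : Type*} [Fintype n] {Q : Matrix n n ℝ}
    (hQ : Q.PosDef) {v : n → ℂ} (hv : v ≠ 0) :
    0 < (star v ⬝ᵥ (Q.map (Complex.ofReal)) *ᵥ v).re := by
  rw [aux_re_quad]
  have hre := hQ.posSemidef.dotProduct_mulVec_nonneg (fun i => (v i).re)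
  have him := hQ.posSemidef.dotProduct_mulVec_nonneg (fun i => (v i).im)
  simp only [star_trivial, RCLike.re_to_real] at hre him
  by_cases hx : (fun i => (v i).re) = 0
  · have hy : (fun i => (v i).im) ≠ 0 := by
      intro hy
      apply hv
      funext i
      have h1 : (v i).re = 0 := congrFun hx i
      have h2 : (v i).im = 0 := congrFun hy i
      exact Complex.ext h1 h2
    have := hQ.dotProduct_mulVec_pos hy
    simp only [star_trivial, RCLike.re_to_real] at this
    linarith
  · have := hQ.dotProduct_mulVec_pos hx
    simp only [star_trivial, RCLike.re_to_real] at this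
    linarith

private lemma aux_mulVec_star {m n : Type*} [Fintype n] (A : Matrix m n ℝ) (v : n → ℂ) :
    (A.map (Complex.ofReal)) *ᵥ (star v) = star ((A.map (Complex.ofReal)) *ᵥ v) := by
  funext i
  simp [mulVec, dotProduct, Matrix.map_apply, star_sum, mul_comm]

end Aux

/-- QMI condition for stability of an autonomous AR system: if there exists Ψ ⪰ 0
with [I;-P]ᵀ(diag(0_p,Ψ) - diag(Ψ,0_p))[I;-P] ≺ 0, then the companion matrix of
P(ξ) is Schur stable. -/
theorem qmi_condition_for_AR_stability
    (p L : ℕ) (P : Fin L → Matrix (Fin p) (Fin p) ℝ)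
    (h : ∃ Ψ : Matrix (Fin L × Fin p) (Fin L × Fin p) ℝ, Ψ.PosSemidef ∧
      (-((stackedIP p L P)ᵀ *
          (embedLower p L * Ψ * (embedLower p L)ᵀ -
            embedUpper p L * Ψ * (embedUpper p L)ᵀ) *
          stackedIP p L P)).PosDef) :
    ∀ z ∈ spectrum ℂ ((blockCompanion p L P).map Complex.ofReal), ‖z‖ < 1 := by
  classical
  obtain ⟨Ψ, hΨ, hQ⟩ := h
  set S := stackedIP p L P with hS
  set A := blockCompanion p L P with hA
  have key : ∀ E : Matrix (Fin (L+1) × Fin p) (Fin L × Fin p) ℝ,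
      Sᵀ * (E * Ψ * Eᵀ) * S = (Eᵀ * S)ᵀ * Ψ * (Eᵀ * S) := by
    intro E
    simp only [Matrix.transpose_mul, Matrix.transpose_transpose, Matrix.mul_assoc]
  have hrw : Sᵀ * (embedLower p L * Ψ * (embedLower p L)ᵀ -
      embedUpper p L * Ψ * (embedUpper p L)ᵀ) * S = Aᵀ * Ψ * A - Ψ := by
    rw [Matrix.mul_sub, Matrix.sub_mul, key, key, aux_upper_mul, aux_lower_mul,
      Matrix.transpose_one, Matrix.one_mul, Matrix.mul_one]
  rw [hrw] at hQ
  have hQ' : (Ψ - Aᵀ * Ψ * A).PosDef := by rwa [neg_sub] at hQ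
  intro z hz
  rw [← AlgEquiv.spectrum_eq (Matrix.toLinAlgEquiv' :
      Matrix (Fin L × Fin p) (Fin L × Fin p) ℂ ≃ₐ[ℂ] _),
    ← Module.End.hasEigenvalue_iff_mem_spectrum] at hz
  obtain ⟨v, hv⟩ := hz.exists_hasEigenvector
  have hv0 : v ≠ 0 := hv.right
  have hAv : (A.map Complex.ofReal) *ᵥ v = z • v := by
    simpa [Matrix.toLinAlgEquiv'_apply] using hv.apply_eq_smul
  -- the quadratic form identity
  have hmap : (Ψ - Aᵀ * Ψ * A).map Complex.ofReal
      = Ψ.map Complex.ofReal -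
        (Aᵀ.map Complex.ofReal) * (Ψ.map Complex.ofReal) * (A.map Complex.ofReal) := by
    rw [Matrix.map_sub _ (fun x y => Complex.ofReal_sub x y)]
    congr 1
    show (Aᵀ * Ψ * A).map Complex.ofRealHom
      = Aᵀ.map Complex.ofRealHom * Ψ.map Complex.ofRealHom * A.map Complex.ofRealHom
    rw [Matrix.map_mul, Matrix.map_mul]
  set q : ℂ := star v ⬝ᵥ (Ψ.map Complex.ofReal) *ᵥ v with hq
  have hquad : star v ⬝ᵥ ((Ψ - Aᵀ * Ψ * A).map Complex.ofReal) *ᵥ v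
      = q - (Complex.normSq z : ℂ) * q := by
    rw [hmap, Matrix.sub_mulVec, dotProduct_sub]
    congr 1
    have h1 : (Aᵀ.map Complex.ofReal) * (Ψ.map Complex.ofReal) * (A.map Complex.ofReal)
        = ((A.map Complex.ofReal)ᵀ) * ((Ψ.map Complex.ofReal) * (A.map Complex.ofReal)) := by
      rw [Matrix.transpose_map, Matrix.mul_assoc]
    rw [h1, ← Matrix.mulVec_mulVec, Matrix.dotProduct_mulVec, Matrix.vecMul_transpose,
      aux_mulVec_star, ← Matrix.mulVec_mulVec, hAv]
    rw [star_smul, Matrix.mulVec_smul, smul_dotProduct, dotProduct_smul,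
      smul_smul, ← hq]
    rw [smul_eq_mul]
    congr 1
    simp [Complex.normSq_eq_conj_mul_self]
  have hpos := aux_re_quad_pos hQ' hv0
  rw [hquad] at hpos
  have hqnn : 0 ≤ q.re := aux_re_quad_nonneg hΨ v
  have hre : (q - (Complex.normSq z : ℂ) * q).re = (1 - Complex.normSq z) * q.re := by
    simp [Complex.sub_re, Complex.mul_re]
    ring
  rw [hre] at hpos
  have h1 : 1 - Complex.normSq z > 0 := by
    by_contra hcon
    push_neg at hcon
    nlinarith
  have habs : ‖z‖ ^ 2 = Complex.normSq z := Complex.sq_norm z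
  nlinarith [norm_nonneg z]
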